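/- Let d ∈ ℕ, let (A_j)_{j∈J} ⊆ GL(d,ℝ) and (b_j)_{j∈J} ⊆ ℝ^d with J countable, set S_j := A_j(·)+b_j, let (w_j)_{j∈J} be positive weights, let (Q_j')_{j∈J} be bounded measurable subsets of ℝ^d, and let ĝ ∈ C^{d+1}(ℝ^d). Suppose A' > 0 satisfies A' ≤ ∑_{j∈J} |ĝ(S_j^{-1}η)|² for almost every η ∈ ℝ^d. Define M₀ := sup_{i∈J} ∑_{j∈J} max{1, ‖A_j^{-1}A_i‖^{d+1}}·(∫_{Q_i'} max_{|α|≤d+1} |(∂^α ĝ)(S_j^{-1}(S_i ξ))|^{2(d+1)} dξ)^{1/(d+1)} and Ŷ_{i,j} := L_{i,j}·∫_{Q_i'} (1+|S_j^{-1}(S_i ξ)|)^{2d+2}·max_{|α|≤d+1} |(∂^α ĝ)(S_j^{-1}(S_i ξ))| dξ with L_{i,j} := max{w_i/w_j, w_j/w_i}·(max{1, ‖A_i^{-1}A_j‖²}·max{1, ‖A_j^{-1}A_i‖³})^{d+1}. Then for every i ∈ J: ‖Ŷ‖_Schur ≥ √(A')·λ(Q_i') and M₀ ≥ A'·(λ(Q_i'))^{1/(d+1)};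 consequently M₀^{(d+1)/(d+2)}·(‖Ŷ‖²_Schur)^{1/(d+2)} ≥ A'·sup_{i∈J} (λ(Q_i'))^{3/(d+2)}. -/

import Mathlib

open MeasureTheory Matrix
open scoped ENNReal FourierTransform

noncomputable section

/-- `ℝ^d` with the Euclidean norm. -/
abbrev Ed (d : ℕ) : Type := EuclideanSpace ℝ (Fin d)

/-- A matrix acting on `ℝ^d`. -/
def matVec {d : ℕ} (A : Matrix (Fin d) (Fin d) ℝ) (x : Ed d) : Ed d :=
  WithLp.toLp 2 (fun i => ∑ j, A i j * x j)

/-- The operator norm of a matrix, with respect to the Euclidean norm. -/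
def matOpNorm {d : ℕ} (A : Matrix (Fin d) (Fin d) ℝ) : ℝ :=
  ⨆ x : Metric.closedBall (0 : Ed d) 1, ‖matVec A (x : Ed d)‖

/-- The partial derivative `∂_i f` of a function `f : ℝ^d → ℂ`. -/
def pd {d : ℕ} (i : Fin d) (f : Ed d → ℂ) : Ed d → ℂ :=
  fun x => fderiv ℝ f x (EuclideanSpace.single i 1)

/-- The multi-index partial derivative `∂^α f` of `f : ℝ^d → ℂ`. -/
def mIdxDeriv {d : ℕ} (α : Fin d → ℕ) (f : Ed d → ℂ) : Ed d → ℂ :=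
  ((List.finRange d).flatMap fun i => List.replicate (α i) i).foldr pd f

/-- `max_{|α| ≤ N} |∂^α f (ξ)|`. -/
def maxDeriv {d : ℕ} (N : ℕ) (f : Ed d → ℂ) (ξ : Ed d) : ℝ :=
  ⨆ α : {α : Fin d → ℕ // ∑ i, α i ≤ N}, ‖mIdxDeriv (α : Fin d → ℕ) f ξ‖

/-- The Schur norm of a nonnegative matrix. -/
def schurNorm {I J : Type*} (M : I → J → ℝ≥0∞) : ℝ≥0∞ :=
  max (⨆ i, ∑' j, M i j) (⨆ j, ∑' i, M i j)

/-! ### Auxiliary lemmas -/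

lemma mIdxDeriv_zero {d : ℕ} (f : Ed d → ℂ) : mIdxDeriv (fun _ => 0) f = f := by
  unfold mIdxDeriv
  rw [List.flatMap_eq_nil_iff.mpr (by simp), List.foldr_nil]

instance finMultiIdx {d N : ℕ} : Finite {α : Fin d → ℕ // ∑ i, α i ≤ N} := by
  refine Finite.of_injective (fun α => (fun i => (⟨min (α.1 i) N, by omega⟩ : Fin (N+1)))) ?_
  intro α β h
  ext i
  have h1 := congrFun h i
  have hα : α.1 i ≤ N := le_trans (Finset.single_le_sum (f := α.1)
    (fun _ _ => Nat.zero_le _) (Finset.mem_univ i)) α.2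
  have hβ : β.1 i ≤ N := le_trans (Finset.single_le_sum (f := β.1)
    (fun _ _ => Nat.zero_le _) (Finset.mem_univ i)) β.2
  simpa [Fin.ext_iff, min_eq_left hα, min_eq_left hβ] using h1

lemma norm_le_maxDeriv {d : ℕ} (N : ℕ) (f : Ed d → ℂ) (ξ : Ed d) :
    ‖f ξ‖ ≤ maxDeriv N f ξ := by
  have := le_ciSup (f := fun α : {α : Fin d → ℕ // ∑ i, α i ≤ N} =>
      ‖mIdxDeriv (α : Fin d → ℕ) f ξ‖)
    (Set.Finite.bddAbove (Set.finite_range _)) ⟨fun _ => 0, by simp⟩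
  simpa [mIdxDeriv_zero, maxDeriv] using this

lemma maxDeriv_nonneg {d : ℕ} (N : ℕ) (f : Ed d → ℂ) (ξ : Ed d) : 0 ≤ maxDeriv N f ξ :=
  le_trans (norm_nonneg _) (norm_le_maxDeriv N f ξ)

lemma matVec_eq_toEuclideanLin {d : ℕ} (A : Matrix (Fin d) (Fin d) ℝ) :
    matVec A = fun x => Matrix.toEuclideanLin A x := by
  funext x
  ext i
  simp [matVec, Matrix.toEuclideanLin_apply, Matrix.mulVec, dotProduct]

lemma matVec_continuous {d : ℕ} (A : Matrix (Fin d) (Fin d) ℝ) : Continuous (matVec A) := by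
  rw [matVec_eq_toEuclideanLin]
  exact (Matrix.toEuclideanLin A).continuous_of_finiteDimensional

lemma det_toEuclideanLin {d : ℕ} (A : Matrix (Fin d) (Fin d) ℝ) :
    LinearMap.det (Matrix.toEuclideanLin (𝕜 := ℝ) (n := Fin d) A) = A.det := by
  have h : Matrix.toEuclideanLin (𝕜 := ℝ) (n := Fin d) A =
      ((WithLp.linearEquiv 2 ℝ (Fin d → ℝ)).symm : (Fin d → ℝ) →ₗ[ℝ] Ed d) ∘ₗ
        (Matrix.toLin' A) ∘ₗ
        (((WithLp.linearEquiv 2 ℝ (Fin d → ℝ)).symm.symm) : Ed d →ₗ[ℝ] (Fin d → ℝ)) := rfl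
  rw [h, LinearMap.det_conj, LinearMap.det_toLin']

lemma ae_affine_comp {d : ℕ} (A : Matrix (Fin d) (Fin d) ℝ) (hA : IsUnit A.det) (b : Ed d)
    {P : Ed d → Prop} (h : ∀ᵐ η : Ed d, P η) :
    ∀ᵐ ξ : Ed d, P (matVec A ξ + b) := by
  rw [Filter.eventually_iff, mem_ae_iff] at h ⊢
  have hdet : LinearMap.det (Matrix.toEuclideanLin (𝕜 := ℝ) (n := Fin d) A) ≠ 0 := by
    rw [det_toEuclideanLin]
    intro hc
    rw [hc] at hA
    exact (not_isUnit_zero hA)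
  have hset : {ξ : Ed d | P (matVec A ξ + b)}ᶜ
      = (Matrix.toEuclideanLin (𝕜 := ℝ) (n := Fin d) A) ⁻¹'
          ((fun x => x + b) ⁻¹' {η | P η}ᶜ) := by
    ext ξ; simp [matVec_eq_toEuclideanLin]
  rw [hset, Measure.addHaar_preimage_linearMap (μ := volume) hdet,
    measure_preimage_add_right, h, mul_zero]

lemma holder_aux {α : Type*} [MeasurableSpace α] (μ : Measure α) (d : ℕ)
    {h : α → ℝ≥0∞} (hm : AEMeasurable h μ) :
    ∫⁻ x, h x ^ 2 ∂μ ≤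
      (∫⁻ x, h x ^ (2 * (d + 1)) ∂μ) ^ (1 / ((d : ℝ) + 1)) *
        μ Set.univ ^ ((d : ℝ) / ((d : ℝ) + 1)) := by
  rcases Nat.eq_zero_or_pos d with hd | hd
  · subst hd
    simp [ENNReal.rpow_one]
  · have hd0 : (0:ℝ) < (d:ℝ) := by exact_mod_cast hd
    have hd1 : (1:ℝ) < (d : ℝ) + 1 := by linarith
    have hpq : ((d : ℝ) + 1).HolderConjugate (((d : ℝ) + 1) / (d : ℝ)) :=
      Real.holderConjugate_iff.mpr ⟨hd1, by field_simp; ring⟩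
    have key := ENNReal.lintegral_mul_le_Lp_mul_Lq μ hpq
      (f := fun x => h x ^ 2) (g := fun _ => (1:ℝ≥0∞))
      (hm.pow_const 2) aemeasurable_const
    simp only [Pi.mul_apply, mul_one] at key
    have h1 : ∀ x : ℝ≥0∞, (x ^ (2:ℕ)) ^ ((d:ℝ)+1) = x ^ (2 * (d+1) : ℕ) := by
      intro x
      rw [← ENNReal.rpow_natCast x 2, ← ENNReal.rpow_mul, ← ENNReal.rpow_natCast x (2*(d+1))]
      congr 1
      push_cast
      ring
    have h2 : (∫⁻ _x : α, (1:ℝ≥0∞) ^ (((d : ℝ) + 1) / (d : ℝ)) ∂μ) ^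
          (1 / (((d : ℝ) + 1) / (d : ℝ)))
        = μ Set.univ ^ ((d : ℝ) / ((d : ℝ) + 1)) := by
      rw [one_div_div]
      simp [lintegral_const]
    simp only [h1] at key
    rw [h2] at key
    exact key

lemma tsum_sq_le_sq_tsum {J : Type*} [Countable J] (a : J → ℝ≥0∞) :
    ∑' j, a j ^ 2 ≤ (∑' j, a j) ^ 2 := by
  calc ∑' j, a j ^ 2 = ∑' j, a j * a j := by simp [sq]
    _ ≤ ∑' j, a j * (∑' k, a k) := Summable.tsum_le_tsum (fun j => mul_le_mul_right (ENNReal.le_tsum j) _)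
        ENNReal.summable ENNReal.summable
    _ = (∑' j, a j) ^ 2 := by rw [ENNReal.tsum_mul_right, sq]

lemma ofReal_tsum_le {J : Type*} [Countable J] (f : J → ℝ) (hf : ∀ j, 0 ≤ f j) :
    ENNReal.ofReal (∑' j, f j) ≤ ∑' j, ENNReal.ofReal (f j) := by
  by_cases hs : Summable f
  · rw [ENNReal.ofReal_tsum_of_nonneg hf hs]
  · rw [tsum_eq_zero_of_not_summable hs]
    simp

lemma ennreal_sqrt_le {s T : ℝ≥0∞} (h : s ^ 2 ≤ T ^ 2) : s ≤ T := by
  have h2 := ENNReal.rpow_le_rpow h (by norm_num : (0:ℝ) ≤ 1/2)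
  calc s = (s ^ 2) ^ ((1:ℝ)/2) := by
        rw [← ENNReal.rpow_natCast s 2, ← ENNReal.rpow_mul]; norm_num
    _ ≤ (T ^ 2) ^ ((1:ℝ)/2) := h2
    _ = T := by rw [← ENNReal.rpow_natCast T 2, ← ENNReal.rpow_mul]; norm_num


/-- Under the Calderón-type lower bound
`A' ≤ ∑_j |ĝ(S_j⁻¹ η)|²` (a.e. `η`), with `M₀` and `Ŷ` as in the paper, one has, for every
`i ∈ J`:  `‖Ŷ‖_Schur ≥ √A' · λ(Q_i')` and `M₀ ≥ A' · λ(Q_i')^{1/(d+1)}`; consequently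
`M₀^{(d+1)/(d+2)} · (‖Ŷ‖²_Schur)^{1/(d+2)} ≥ A' · sup_i λ(Q_i')^{3/(d+2)}`. -/
theorem stmt19 (d : ℕ) {J : Type*} [Countable J]
    (A : J → Matrix (Fin d) (Fin d) ℝ) (hA : ∀ j, IsUnit (A j).det)
    (b : J → Ed d) (w : J → ℝ) (hw : ∀ j, 0 < w j)
    (Q' : J → Set (Ed d)) (hQm : ∀ j, MeasurableSet (Q' j))
    (hQb : ∀ j, Bornology.IsBounded (Q' j))
    (ghat : Ed d → ℂ) (hghat : ContDiff ℝ ((d : ℕ∞) + 1) ghat)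
    (A' : ℝ) (hA' : 0 < A')
    (hlow : ∀ᵐ η : Ed d, A' ≤ ∑' j, ‖ghat (matVec (A j)⁻¹ (η - b j))‖ ^ 2)
    -- `S_j⁻¹ ∘ S_i`
    (SjiS : J → J → Ed d → Ed d)
    (hSjiS : ∀ i j, SjiS i j = fun ξ => matVec (A j)⁻¹ (matVec (A i) ξ + b i - b j))
    (M₀ : ℝ≥0∞)
    (hM₀ : M₀ = ⨆ i, ∑' j,
      ENNReal.ofReal (max 1 (matOpNorm ((A j)⁻¹ * A i) ^ (d + 1))) *
        (∫⁻ ξ in Q' i,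
            ENNReal.ofReal (maxDeriv (d + 1) ghat (SjiS i j ξ)) ^ (2 * (d + 1))) ^
          (1 / ((d : ℝ) + 1)))
    (Yhat : J → J → ℝ≥0∞)
    (hYhat : ∀ i j, Yhat i j =
      ENNReal.ofReal (max (w i / w j) (w j / w i) *
        (max 1 (matOpNorm ((A i)⁻¹ * A j) ^ 2) *
          max 1 (matOpNorm ((A j)⁻¹ * A i) ^ 3)) ^ (d + 1)) *
      ∫⁻ ξ in Q' i,
        ENNReal.ofReal ((1 + ‖SjiS i j ξ‖) ^ (2 * d + 2) * maxDeriv (d + 1) ghat (SjiS i j ξ))) :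
    (∀ i : J,
      ENNReal.ofReal (Real.sqrt A') * volume (Q' i) ≤ schurNorm Yhat ∧
      ENNReal.ofReal A' * volume (Q' i) ^ (1 / ((d : ℝ) + 1)) ≤ M₀) ∧
    ENNReal.ofReal A' * ⨆ i : J, volume (Q' i) ^ (3 / ((d : ℝ) + 2))
      ≤ M₀ ^ (((d : ℝ) + 1) / ((d : ℝ) + 2)) * (schurNorm Yhat ^ 2) ^ (1 / ((d : ℝ) + 2)) := by
  classical
  -- notation
  set a : J → J → Ed d → ℝ≥0∞ := fun i j ξ => ENNReal.ofReal ‖ghat (SjiS i j ξ)‖ with ha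
  have hacont : ∀ i j, Continuous (a i j) := by
    intro i j
    simp only [ha, hSjiS]
    exact ENNReal.continuous_ofReal.comp ((hghat.continuous.comp
      ((matVec_continuous (A j)⁻¹).comp
        (((matVec_continuous (A i)).add continuous_const).sub continuous_const))).norm)
  -- pointwise a.e. bounds
  have hptwise : ∀ i : J, ∀ᵐ ξ : Ed d, ENNReal.ofReal A' ≤ ∑' j, a i j ξ ^ 2 := by
    intro i
    have := ae_affine_comp (A i) (hA i) (b i) hlow
    filter_upwards [this] with ξ hξ
    calc ENNReal.ofReal A' ≤ ENNReal.ofReal (∑' j, ‖ghat (matVec (A j)⁻¹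
            (matVec (A i) ξ + b i - b j))‖ ^ 2) := ENNReal.ofReal_le_ofReal hξ
      _ ≤ ∑' j, ENNReal.ofReal (‖ghat (matVec (A j)⁻¹ (matVec (A i) ξ + b i - b j))‖ ^ 2) :=
          ofReal_tsum_le _ (fun j => by positivity)
      _ = ∑' j, a i j ξ ^ 2 := by
          apply tsum_congr
          intro j
          simp only [ha, hSjiS]
          rw [ENNReal.ofReal_pow (norm_nonneg _)]
  have hptsqrt : ∀ i : J, ∀ᵐ ξ : Ed d,
      ENNReal.ofReal (Real.sqrt A') ≤ ∑' j, a i j ξ := by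
    intro i
    filter_upwards [hptwise i] with ξ hξ
    apply ennreal_sqrt_le
    have h1 : ENNReal.ofReal (Real.sqrt A') ^ 2 = ENNReal.ofReal A' := by
      rw [← ENNReal.ofReal_pow (Real.sqrt_nonneg _), Real.sq_sqrt hA'.le]
    rw [h1]
    exact le_trans hξ (tsum_sq_le_sq_tsum _)
  have hVlt : ∀ i, volume (Q' i) ≠ ∞ := fun i => ((hQb i).measure_lt_top).ne
  -- maxDeriv bound pointwise
  have hmd : ∀ i j ξ, a i j ξ ≤ ENNReal.ofReal (maxDeriv (d+1) ghat (SjiS i j ξ)) := by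
    intro i j ξ
    exact ENNReal.ofReal_le_ofReal (norm_le_maxDeriv _ _ _)
  -- Part 1 : Schur bound
  have part1 : ∀ i : J, ENNReal.ofReal (Real.sqrt A') * volume (Q' i) ≤ schurNorm Yhat := by
    intro i
    have step1 : ENNReal.ofReal (Real.sqrt A') * volume (Q' i)
        ≤ ∑' j, ∫⁻ ξ in Q' i, a i j ξ := by
      rw [← lintegral_tsum (fun j => ((hacont i j).measurable).aemeasurable)]
      calc ENNReal.ofReal (Real.sqrt A') * volume (Q' i)
          = ∫⁻ _ξ in Q' i, ENNReal.ofReal (Real.sqrt A') := by rw [setLIntegral_const]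
        _ ≤ ∫⁻ ξ in Q' i, ∑' j, a i j ξ :=
            lintegral_mono_ae (ae_restrict_of_ae (hptsqrt i))
    have step2 : ∀ j, (∫⁻ ξ in Q' i, a i j ξ) ≤ Yhat i j := by
      intro j
      rw [hYhat i j]
      have hfac : (1:ℝ≥0∞) ≤ ENNReal.ofReal (max (w i / w j) (w j / w i) *
          (max 1 (matOpNorm ((A i)⁻¹ * A j) ^ 2) *
            max 1 (matOpNorm ((A j)⁻¹ * A i) ^ 3)) ^ (d + 1)) := by
        rw [← ENNReal.ofReal_one]
        apply ENNReal.ofReal_le_ofReal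
        have h1 : (1:ℝ) ≤ max (w i / w j) (w j / w i) := by
          rcases le_total (w i) (w j) with h | h
          · exact le_trans ((one_le_div (hw i)).mpr h) (le_max_right _ _)
          · exact le_trans ((one_le_div (hw j)).mpr h) (le_max_left _ _)
        have h2 : (1:ℝ) ≤ (max 1 (matOpNorm ((A i)⁻¹ * A j) ^ 2) *
            max 1 (matOpNorm ((A j)⁻¹ * A i) ^ 3)) ^ (d + 1) := by
          apply one_le_pow₀
          nlinarith [le_max_left (1:ℝ) (matOpNorm ((A i)⁻¹ * A j) ^ 2),
            le_max_left (1:ℝ) (matOpNorm ((A j)⁻¹ * A i) ^ 3)]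
        nlinarith
      calc (∫⁻ ξ in Q' i, a i j ξ)
          ≤ ∫⁻ ξ in Q' i, ENNReal.ofReal ((1 + ‖SjiS i j ξ‖) ^ (2 * d + 2) *
              maxDeriv (d + 1) ghat (SjiS i j ξ)) := by
            apply lintegral_mono
            intro ξ
            refine le_trans (hmd i j ξ) (ENNReal.ofReal_le_ofReal ?_)
            have hge1 : (1:ℝ) ≤ (1 + ‖SjiS i j ξ‖) ^ (2 * d + 2) :=
              one_le_pow₀ (by linarith [norm_nonneg (SjiS i j ξ)])
            nlinarith [maxDeriv_nonneg (d+1) ghat (SjiS i j ξ)]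
        _ ≤ _ := le_mul_of_one_le_left' hfac
    calc ENNReal.ofReal (Real.sqrt A') * volume (Q' i)
        ≤ ∑' j, ∫⁻ ξ in Q' i, a i j ξ := step1
      _ ≤ ∑' j, Yhat i j := Summable.tsum_le_tsum step2 ENNReal.summable ENNReal.summable
      _ ≤ ⨆ i', ∑' j, Yhat i' j := le_iSup (fun i' => ∑' j, Yhat i' j) i
      _ ≤ schurNorm Yhat := le_max_left _ _
  -- Part 2 : M₀ bound
  have part2 : ∀ i : J, ENNReal.ofReal A' * volume (Q' i) ^ (1 / ((d : ℝ) + 1)) ≤ M₀ := by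
    intro i
    set V := volume (Q' i) with hV
    have key : ENNReal.ofReal A' * V ≤ M₀ * V ^ ((d:ℝ) / ((d:ℝ) + 1)) := by
      have step1 : ENNReal.ofReal A' * V ≤ ∑' j, ∫⁻ ξ in Q' i, a i j ξ ^ 2 := by
        rw [← lintegral_tsum (fun j => (((hacont i j).measurable).pow_const 2).aemeasurable)]
        calc ENNReal.ofReal A' * V
            = ∫⁻ _ξ in Q' i, ENNReal.ofReal A' := by rw [setLIntegral_const]
          _ ≤ ∫⁻ ξ in Q' i, ∑' j, a i j ξ ^ 2 :=
              lintegral_mono_ae (ae_restrict_of_ae (hptwise i))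
      have step2 : ∀ j, (∫⁻ ξ in Q' i, a i j ξ ^ 2)
          ≤ ((∫⁻ ξ in Q' i, ENNReal.ofReal (maxDeriv (d + 1) ghat (SjiS i j ξ)) ^ (2 * (d + 1))) ^
              (1 / ((d : ℝ) + 1))) * V ^ ((d:ℝ) / ((d:ℝ) + 1)) := by
        intro j
        calc (∫⁻ ξ in Q' i, a i j ξ ^ 2)
            ≤ (∫⁻ ξ in Q' i, a i j ξ ^ (2 * (d + 1))) ^ (1 / ((d : ℝ) + 1)) *
                (volume.restrict (Q' i)) Set.univ ^ ((d:ℝ) / ((d:ℝ) + 1)) :=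
              holder_aux _ d ((hacont i j).measurable).aemeasurable
          _ ≤ _ := by
              rw [Measure.restrict_apply_univ]
              gcongr
              exact hmd i j _
      have step3 : (∑' j, ((∫⁻ ξ in Q' i,
          ENNReal.ofReal (maxDeriv (d + 1) ghat (SjiS i j ξ)) ^ (2 * (d + 1))) ^
            (1 / ((d : ℝ) + 1)))) ≤ M₀ := by
        rw [hM₀]
        refine le_trans ?_ (le_iSup _ i)
        apply Summable.tsum_le_tsum _ ENNReal.summable ENNReal.summable
        intro j
        apply le_mul_of_one_le_left'
        rw [← ENNReal.ofReal_one]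
        exact ENNReal.ofReal_le_ofReal (le_max_left _ _)
      calc ENNReal.ofReal A' * V ≤ ∑' j, ∫⁻ ξ in Q' i, a i j ξ ^ 2 := step1
        _ ≤ ∑' j, ((∫⁻ ξ in Q' i,
              ENNReal.ofReal (maxDeriv (d + 1) ghat (SjiS i j ξ)) ^ (2 * (d + 1))) ^
                (1 / ((d : ℝ) + 1))) * V ^ ((d:ℝ) / ((d:ℝ) + 1)) :=
            Summable.tsum_le_tsum step2 ENNReal.summable ENNReal.summable
        _ = (∑' j, ((∫⁻ ξ in Q' i,
              ENNReal.ofReal (maxDeriv (d + 1) ghat (SjiS i j ξ)) ^ (2 * (d + 1))) ^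
                (1 / ((d : ℝ) + 1)))) * V ^ ((d:ℝ) / ((d:ℝ) + 1)) := ENNReal.tsum_mul_right
        _ ≤ M₀ * V ^ ((d:ℝ) / ((d:ℝ) + 1)) := by gcongr
    -- cancel
    by_cases hV0 : V = 0
    · rw [hV0, ENNReal.zero_rpow_of_pos (by positivity), mul_zero]
      exact bot_le
    · have hsplit : V = V ^ (1 / ((d:ℝ) + 1)) * V ^ ((d:ℝ) / ((d:ℝ) + 1)) := by
        rw [← ENNReal.rpow_add_of_nonneg _ _ (by positivity) (by positivity)]
        rw [show 1 / ((d:ℝ) + 1) + (d:ℝ) / ((d:ℝ) + 1) = 1 by field_simp; ring]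
        rw [ENNReal.rpow_one]
      nth_rewrite 1 [hsplit] at key
      rw [← mul_assoc] at key
      exact (ENNReal.mul_le_mul_iff_left
        (ENNReal.rpow_pos (pos_iff_ne_zero.mpr hV0) (hVlt i)).ne'
        (ENNReal.rpow_ne_top_of_nonneg (by positivity) (hVlt i))).mp key
  refine ⟨fun i => ⟨part1 i, part2 i⟩, ?_⟩
  -- Part 3 : combination
  rw [ENNReal.mul_iSup]
  apply iSup_le
  intro i
  set V := volume (Q' i) with hV
  have hx : (ENNReal.ofReal (Real.sqrt A')) ^ ((2:ℕ):ℝ) = ENNReal.ofReal A' := by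
    rw [ENNReal.rpow_natCast, ← ENNReal.ofReal_pow (Real.sqrt_nonneg _), Real.sq_sqrt hA'.le]
  have hd2 : (0:ℝ) < (d:ℝ) + 2 := by positivity
  have hd1 : (0:ℝ) < (d:ℝ) + 1 := by positivity
  have ident : ENNReal.ofReal A' * V ^ (3 / ((d : ℝ) + 2))
      = (ENNReal.ofReal A' * V ^ (1 / ((d:ℝ) + 1))) ^ (((d : ℝ) + 1) / ((d : ℝ) + 2)) *
        ((ENNReal.ofReal (Real.sqrt A') * V) ^ 2) ^ (1 / ((d : ℝ) + 2)) := by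
    rw [← ENNReal.rpow_natCast (ENNReal.ofReal (Real.sqrt A') * V) 2,
      ENNReal.mul_rpow_of_nonneg _ _ (by positivity), ← hx,
      ENNReal.mul_rpow_of_nonneg _ _ (by positivity),
      ENNReal.mul_rpow_of_nonneg _ _ (by positivity),
      ← ENNReal.rpow_mul, ← ENNReal.rpow_mul, ← ENNReal.rpow_mul, ← ENNReal.rpow_mul,
      mul_mul_mul_comm,
      ← ENNReal.rpow_add_of_nonneg _ _ (by positivity) (by positivity),
      ← ENNReal.rpow_add_of_nonneg _ _ (by positivity) (by positivity)]
    congr 1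
    · congr 1
      push_cast
      field_simp
      ring
    · congr 1
      push_cast
      field_simp
      ring
  rw [ident]
  gcongr
  · exact part2 i
  · exact part1 i

end
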